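/- Assume Υ(0) = Υ₀ = 3/4 (i.e. n₀ = 3), Υ(1) = 1, σ(0) = 0, σ(1) = γ₁ − 1 with 1 < γ₁ ≤ 2, f(0) = f₀ > 0, f(1) > 0. Then no interior orbit converges to the fixed point B₁ = (0, 4/5, 0) as λ → ∞. -/

import Mathlib

set_option maxRecDepth 10000
set_option maxHeartbeats 1000000


open Set Filter Topology

/-- `H(U,V,Ω) = (1+σ(Ω))V(1−U+σ(Ω)U)`. -/
noncomputable def Hfun (σ : ℝ → ℝ) (U V W : ℝ) : ℝ :=
  (1 + σ W) * V * (1 - U + σ W * U)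

/-- The vector field `F` on the cube `[0,1]³` in coordinates `(U,V,Ω)`. -/
noncomputable def Ffield (Υ σ f : ℝ → ℝ) (U V W : ℝ) : ℝ × ℝ × ℝ :=
  (U * (1 - U) * ((1 - V) * (3 - 4 * U) - Υ W * Hfun σ U V W),
   V * (1 - V) * ((2 * U - 1) * (1 - V + 2 * σ W * V) + (1 - Υ W) * Hfun σ U V W),
   -(f W) * W * (1 - W) * Hfun σ U V W)

private lemma eventually_pos_right {φg : ℝ → ℝ} {d x : ℝ} (h : HasDerivAt φg d x)
    (h0 : φg x = 0) (hd : 0 < d) : ∀ᶠ l in 𝓝[>] x, 0 < φg l := by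
  have hs : Tendsto (slope φg x) (𝓝[≠] x) (𝓝 d) := hasDerivAt_iff_tendsto_slope.mp h
  have hs' : ∀ᶠ l in 𝓝[≠] x, 0 < slope φg x l := hs.eventually (eventually_gt_nhds hd)
  have hsub : 𝓝[>] x ≤ 𝓝[≠] x := nhdsWithin_mono x fun y hy => ne_of_gt hy
  filter_upwards [hsub hs', self_mem_nhdsWithin] with l hl hl'
  have hlx : 0 < l - x := sub_pos.2 hl'
  rw [slope_def_field, h0, sub_zero] at hl
  have h2 := mul_pos hl hlx
  rwa [div_mul_cancel₀ _ (ne_of_gt hlx)] at h2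

private lemma mbd {x y X Y : ℝ} (hx : |x| ≤ X) (hy : |y| ≤ Y) : |x * y| ≤ X * Y := by
  rw [abs_mul]
  exact mul_le_mul hx hy (abs_nonneg _) ((abs_nonneg _).trans hx)

private lemma KI1lem (u v a s w₁ : ℝ) (hu0 : 0 < u) (hud : u ≤ 1/4000)
    (hv : |v| ≤ 1/4000) (haw : |a| ≤ w₁) (hs0 : 0 ≤ s) (hsw' : s ≤ w₁)
    (hw0 : 0 ≤ w₁) (hwd : w₁ ≤ 1/4000)
    (hcone : u/20 + 700*w₁ ≤ v + (4/25)*u) :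
    (v + (4/25)*u)/10 ≤ (4/5 + v) * ((1/5 : ℝ) - v) * ((2*u - 1) * ((1/5 : ℝ) - v + 2*s*(4/5 + v)) + (1/4 - a) * ((1 + s) * (4/5 + v) * (1 - u + s*u))) + (4/25) * (u * (1 - u) * (((1/5 : ℝ) - v) * (3 - 4*u) - (3/4 + a) * ((1 + s) * (4/5 + v) * (1 - u + s*u)))) := by
  have hu1 : |u| ≤ 1 := by rw [abs_of_pos hu0]; linarith
  have hud2 : |u| ≤ (1/4000 : ℝ) := by rw [abs_of_pos hu0]; linarith
  have hvd : |v| ≤ (1/4000 : ℝ) := hv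
  have hv1 : |v| ≤ 1 := hv.trans (by norm_num)
  have ha1 : |a| ≤ 1 := haw.trans (hwd.trans (by norm_num))
  have hsw : |s| ≤ w₁ := by rw [abs_of_nonneg hs0]; exact hsw'
  have hs1 : |s| ≤ 1 := hsw.trans (hwd.trans (by norm_num))
  have hy0 : 0 < v + (4/25)*u := by linarith
  have hu20 : |u| ≤ (20*(v + (4/25)*u)) := by rw [abs_of_pos hu0]; linarith
  have hv5 : |v| ≤ (5*(v + (4/25)*u)) := abs_le.mpr ⟨by linarith, by linarith⟩
  have hb1 : |s| ≤ w₁ := hsw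
  obtain ⟨hb1l, hb1r⟩ := abs_le.mp hb1
  have hb2 : |a| ≤ w₁ := haw
  obtain ⟨hb2l, hb2r⟩ := abs_le.mp hb2
  have hb3 : |a * s| ≤ w₁ * 1 := (mbd haw hs1)
  obtain ⟨hb3l, hb3r⟩ := abs_le.mp hb3
  have hb4 : |v * s| ≤ 1 * w₁ := (mbd hv1 hsw)
  obtain ⟨hb4l, hb4r⟩ := abs_le.mp hb4
  have hb5 : |v * a| ≤ 1 * w₁ := (mbd hv1 haw)
  obtain ⟨hb5l, hb5r⟩ := abs_le.mp hb5
  have hb6 : |v * (a * s)| ≤ 1 * (w₁ * 1) := (mbd hv1 (mbd haw hs1))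
  obtain ⟨hb6l, hb6r⟩ := abs_le.mp hb6
  have hb7 : |v * v| ≤ (5*(v + (4/25)*u)) * (1/4000 : ℝ) := (mbd hv5 hvd)
  obtain ⟨hb7l, hb7r⟩ := abs_le.mp hb7
  have hb8 : |v * (v * s)| ≤ 1 * (1 * w₁) := (mbd hv1 (mbd hv1 hsw))
  obtain ⟨hb8l, hb8r⟩ := abs_le.mp hb8
  have hb9 : |v * (v * a)| ≤ 1 * (1 * w₁) := (mbd hv1 (mbd hv1 haw))
  obtain ⟨hb9l, hb9r⟩ := abs_le.mp hb9
  have hb10 : |v * (v * (a * s))| ≤ 1 * (1 * (w₁ * 1)) := (mbd hv1 (mbd hv1 (mbd haw hs1)))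
  obtain ⟨hb10l, hb10r⟩ := abs_le.mp hb10
  have hb11 : |v * (v * v)| ≤ (5*(v + (4/25)*u)) * ((1/4000 : ℝ) * 1) := (mbd hv5 (mbd hvd hv1))
  obtain ⟨hb11l, hb11r⟩ := abs_le.mp hb11
  have hb12 : |v * (v * (v * s))| ≤ 1 * (1 * (1 * w₁)) := (mbd hv1 (mbd hv1 (mbd hv1 hsw)))
  obtain ⟨hb12l, hb12r⟩ := abs_le.mp hb12
  have hb13 : |v * (v * (v * a))| ≤ 1 * (1 * (1 * w₁)) := (mbd hv1 (mbd hv1 (mbd hv1 haw)))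
  obtain ⟨hb13l, hb13r⟩ := abs_le.mp hb13
  have hb14 : |v * (v * (v * (a * s)))| ≤ 1 * (1 * (1 * (w₁ * 1))) := (mbd hv1 (mbd hv1 (mbd hv1 (mbd haw hs1))))
  obtain ⟨hb14l, hb14r⟩ := abs_le.mp hb14
  have hb15 : |u * s| ≤ 1 * w₁ := (mbd hu1 hsw)
  obtain ⟨hb15l, hb15r⟩ := abs_le.mp hb15
  have hb16 : |u * (s * s)| ≤ 1 * (w₁ * 1) := (mbd hu1 (mbd hsw hs1))
  obtain ⟨hb16l, hb16r⟩ := abs_le.mp hb16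
  have hb17 : |u * (a * s)| ≤ 1 * (w₁ * 1) := (mbd hu1 (mbd haw hs1))
  obtain ⟨hb17l, hb17r⟩ := abs_le.mp hb17
  have hb18 : |u * (a * (s * s))| ≤ 1 * (w₁ * (1 * 1)) := (mbd hu1 (mbd haw (mbd hs1 hs1)))
  obtain ⟨hb18l, hb18r⟩ := abs_le.mp hb18
  have hb19 : |u * v| ≤ (20*(v + (4/25)*u)) * (1/4000 : ℝ) := (mbd hu20 hvd)
  obtain ⟨hb19l, hb19r⟩ := abs_le.mp hb19
  have hb20 : |u * (v * s)| ≤ 1 * (1 * w₁) := (mbd hu1 (mbd hv1 hsw))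
  obtain ⟨hb20l, hb20r⟩ := abs_le.mp hb20
  have hb21 : |u * (v * (s * s))| ≤ 1 * (1 * (w₁ * 1)) := (mbd hu1 (mbd hv1 (mbd hsw hs1)))
  obtain ⟨hb21l, hb21r⟩ := abs_le.mp hb21
  have hb22 : |u * (v * a)| ≤ 1 * (1 * w₁) := (mbd hu1 (mbd hv1 haw))
  obtain ⟨hb22l, hb22r⟩ := abs_le.mp hb22
  have hb23 : |u * (v * (a * s))| ≤ 1 * (1 * (w₁ * 1)) := (mbd hu1 (mbd hv1 (mbd haw hs1)))
  obtain ⟨hb23l, hb23r⟩ := abs_le.mp hb23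
  have hb24 : |u * (v * (a * (s * s)))| ≤ 1 * (1 * (w₁ * (1 * 1))) := (mbd hu1 (mbd hv1 (mbd haw (mbd hs1 hs1))))
  obtain ⟨hb24l, hb24r⟩ := abs_le.mp hb24
  have hb25 : |u * (v * v)| ≤ (20*(v + (4/25)*u)) * ((1/4000 : ℝ) * 1) := (mbd hu20 (mbd hvd hv1))
  obtain ⟨hb25l, hb25r⟩ := abs_le.mp hb25
  have hb26 : |u * (v * (v * s))| ≤ 1 * (1 * (1 * w₁)) := (mbd hu1 (mbd hv1 (mbd hv1 hsw)))
  obtain ⟨hb26l, hb26r⟩ := abs_le.mp hb26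
  have hb27 : |u * (v * (v * (s * s)))| ≤ 1 * (1 * (1 * (w₁ * 1))) := (mbd hu1 (mbd hv1 (mbd hv1 (mbd hsw hs1))))
  obtain ⟨hb27l, hb27r⟩ := abs_le.mp hb27
  have hb28 : |u * (v * (v * a))| ≤ 1 * (1 * (1 * w₁)) := (mbd hu1 (mbd hv1 (mbd hv1 haw)))
  obtain ⟨hb28l, hb28r⟩ := abs_le.mp hb28
  have hb29 : |u * (v * (v * (a * (s * s))))| ≤ 1 * (1 * (1 * (w₁ * (1 * 1)))) := (mbd hu1 (mbd hv1 (mbd hv1 (mbd haw (mbd hs1 hs1)))))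
  obtain ⟨hb29l, hb29r⟩ := abs_le.mp hb29
  have hb30 : |u * (v * (v * v))| ≤ (20*(v + (4/25)*u)) * ((1/4000 : ℝ) * (1 * 1)) := (mbd hu20 (mbd hvd (mbd hv1 hv1)))
  obtain ⟨hb30l, hb30r⟩ := abs_le.mp hb30
  have hb31 : |u * (v * (v * (v * s)))| ≤ 1 * (1 * (1 * (1 * w₁))) := (mbd hu1 (mbd hv1 (mbd hv1 (mbd hv1 hsw))))
  obtain ⟨hb31l, hb31r⟩ := abs_le.mp hb31
  have hb32 : |u * (v * (v * (v * (s * s))))| ≤ 1 * (1 * (1 * (1 * (w₁ * 1)))) := (mbd hu1 (mbd hv1 (mbd hv1 (mbd hv1 (mbd hsw hs1)))))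
  obtain ⟨hb32l, hb32r⟩ := abs_le.mp hb32
  have hb33 : |u * (v * (v * (v * a)))| ≤ 1 * (1 * (1 * (1 * w₁))) := (mbd hu1 (mbd hv1 (mbd hv1 (mbd hv1 haw))))
  obtain ⟨hb33l, hb33r⟩ := abs_le.mp hb33
  have hb34 : |u * (v * (v * (v * (a * (s * s)))))| ≤ 1 * (1 * (1 * (1 * (w₁ * (1 * 1))))) := (mbd hu1 (mbd hv1 (mbd hv1 (mbd hv1 (mbd haw (mbd hs1 hs1))))))
  obtain ⟨hb34l, hb34r⟩ := abs_le.mp hb34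
  have hb35 : |u * u| ≤ (20*(v + (4/25)*u)) * (1/4000 : ℝ) := (mbd hu20 hud2)
  obtain ⟨hb35l, hb35r⟩ := abs_le.mp hb35
  have hb36 : |u * (u * s)| ≤ 1 * (1 * w₁) := (mbd hu1 (mbd hu1 hsw))
  obtain ⟨hb36l, hb36r⟩ := abs_le.mp hb36
  have hb37 : |u * (u * (s * s))| ≤ 1 * (1 * (w₁ * 1)) := (mbd hu1 (mbd hu1 (mbd hsw hs1)))
  obtain ⟨hb37l, hb37r⟩ := abs_le.mp hb37
  have hb38 : |u * (u * a)| ≤ 1 * (1 * w₁) := (mbd hu1 (mbd hu1 haw))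
  obtain ⟨hb38l, hb38r⟩ := abs_le.mp hb38
  have hb39 : |u * (u * (a * s))| ≤ 1 * (1 * (w₁ * 1)) := (mbd hu1 (mbd hu1 (mbd haw hs1)))
  obtain ⟨hb39l, hb39r⟩ := abs_le.mp hb39
  have hb40 : |u * (u * (a * (s * s)))| ≤ 1 * (1 * (w₁ * (1 * 1))) := (mbd hu1 (mbd hu1 (mbd haw (mbd hs1 hs1))))
  obtain ⟨hb40l, hb40r⟩ := abs_le.mp hb40
  have hb41 : |u * (u * v)| ≤ (20*(v + (4/25)*u)) * ((1/4000 : ℝ) * 1) := (mbd hu20 (mbd hud2 hv1))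
  obtain ⟨hb41l, hb41r⟩ := abs_le.mp hb41
  have hb42 : |u * (u * (v * s))| ≤ 1 * (1 * (1 * w₁)) := (mbd hu1 (mbd hu1 (mbd hv1 hsw)))
  obtain ⟨hb42l, hb42r⟩ := abs_le.mp hb42
  have hb43 : |u * (u * (v * (s * s)))| ≤ 1 * (1 * (1 * (w₁ * 1))) := (mbd hu1 (mbd hu1 (mbd hv1 (mbd hsw hs1))))
  obtain ⟨hb43l, hb43r⟩ := abs_le.mp hb43
  have hb44 : |u * (u * (v * a))| ≤ 1 * (1 * (1 * w₁)) := (mbd hu1 (mbd hu1 (mbd hv1 haw)))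
  obtain ⟨hb44l, hb44r⟩ := abs_le.mp hb44
  have hb45 : |u * (u * (v * (a * s)))| ≤ 1 * (1 * (1 * (w₁ * 1))) := (mbd hu1 (mbd hu1 (mbd hv1 (mbd haw hs1))))
  obtain ⟨hb45l, hb45r⟩ := abs_le.mp hb45
  have hb46 : |u * (u * (v * (a * (s * s))))| ≤ 1 * (1 * (1 * (w₁ * (1 * 1)))) := (mbd hu1 (mbd hu1 (mbd hv1 (mbd haw (mbd hs1 hs1)))))
  obtain ⟨hb46l, hb46r⟩ := abs_le.mp hb46
  have hb47 : |u * (u * u)| ≤ (20*(v + (4/25)*u)) * ((1/4000 : ℝ) * 1) := (mbd hu20 (mbd hud2 hu1))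
  obtain ⟨hb47l, hb47r⟩ := abs_le.mp hb47
  have hb48 : |u * (u * (u * (s * s)))| ≤ 1 * (1 * (1 * (w₁ * 1))) := (mbd hu1 (mbd hu1 (mbd hu1 (mbd hsw hs1))))
  obtain ⟨hb48l, hb48r⟩ := abs_le.mp hb48
  have hb49 : |u * (u * (u * a))| ≤ 1 * (1 * (1 * w₁)) := (mbd hu1 (mbd hu1 (mbd hu1 haw)))
  obtain ⟨hb49l, hb49r⟩ := abs_le.mp hb49
  have hb50 : |u * (u * (u * (a * (s * s))))| ≤ 1 * (1 * (1 * (w₁ * (1 * 1)))) := (mbd hu1 (mbd hu1 (mbd hu1 (mbd haw (mbd hs1 hs1)))))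
  obtain ⟨hb50l, hb50r⟩ := abs_le.mp hb50
  have hb51 : |u * (u * (u * v))| ≤ (20*(v + (4/25)*u)) * ((1/4000 : ℝ) * (1 * 1)) := (mbd hu20 (mbd hud2 (mbd hu1 hv1)))
  obtain ⟨hb51l, hb51r⟩ := abs_le.mp hb51
  have hb52 : |u * (u * (u * (v * (s * s))))| ≤ 1 * (1 * (1 * (1 * (w₁ * 1)))) := (mbd hu1 (mbd hu1 (mbd hu1 (mbd hv1 (mbd hsw hs1)))))
  obtain ⟨hb52l, hb52r⟩ := abs_le.mp hb52
  have hb53 : |u * (u * (u * (v * a)))| ≤ 1 * (1 * (1 * (1 * w₁))) := (mbd hu1 (mbd hu1 (mbd hu1 (mbd hv1 haw))))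
  obtain ⟨hb53l, hb53r⟩ := abs_le.mp hb53
  have hb54 : |u * (u * (u * (v * (a * (s * s)))))| ≤ 1 * (1 * (1 * (1 * (w₁ * (1 * 1))))) := (mbd hu1 (mbd hu1 (mbd hu1 (mbd hv1 (mbd haw (mbd hs1 hs1))))))
  obtain ⟨hb54l, hb54r⟩ := abs_le.mp hb54
  linarith [hb1l, hb1r, hb2l, hb2r, hb3l, hb3r, hb4l, hb4r, hb5l, hb5r, hb6l, hb6r, hb7l, hb7r, hb8l, hb8r, hb9l, hb9r, hb10l, hb10r, hb11l, hb11r, hb12l, hb12r, hb13l, hb13r, hb14l, hb14r, hb15l, hb15r, hb16l, hb16r, hb17l, hb17r, hb18l, hb18r, hb19l, hb19r, hb20l, hb20r, hb21l, hb21r, hb22l, hb22r, hb23l, hb23r, hb24l, hb24r, hb25l, hb25r, hb26l, hb26r, hb27l, hb27r, hb28l, hb28r, hb29l, hb29r, hb30l, hb30r, hb31l, hb31r, hb32l, hb32r, hb33l, hb33r, hb34l, hb34r, hb35l, hb35r, hb36l, hb36r, hb37l, hb37r, hb38l, hb38r, hb39l, hb39r, hb40l, hb40r, hb41l, hb41r,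 hb42l, hb42r, hb43l, hb43r, hb44l, hb44r, hb45l, hb45r, hb46l, hb46r, hb47l, hb47r, hb48l, hb48r, hb49l, hb49r, hb50l, hb50r, hb51l, hb51r, hb52l, hb52r, hb53l, hb53r, hb54l, hb54r, hcone, hy0, hu0, hw0]

private lemma KI2lem (u v a s w₁ : ℝ) (hu0 : 0 < u) (hud : u ≤ 1/4000)
    (hv : |v| ≤ 1/4000) (haw : |a| ≤ w₁) (hs0 : 0 ≤ s) (hsw' : s ≤ w₁)
    (hw0 : 0 ≤ w₁) (hwd : w₁ ≤ 1/4000)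
    (hcone : u/20 + 700*w₁ ≤ v + (4/25)*u) :
    u * (1 - u) * (((1/5 : ℝ) - v) * (3 - 4*u) - (3/4 + a) * ((1 + s) * (4/5 + v) * (1 - u + s*u))) ≤ v + (4/25)*u := by
  have hu1 : |u| ≤ 1 := by rw [abs_of_pos hu0]; linarith
  have hud2 : |u| ≤ (1/4000 : ℝ) := by rw [abs_of_pos hu0]; linarith
  have hvd : |v| ≤ (1/4000 : ℝ) := hv
  have hv1 : |v| ≤ 1 := hv.trans (by norm_num)
  have ha1 : |a| ≤ 1 := haw.trans (hwd.trans (by norm_num))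
  have hsw : |s| ≤ w₁ := by rw [abs_of_nonneg hs0]; exact hsw'
  have hs1 : |s| ≤ 1 := hsw.trans (hwd.trans (by norm_num))
  have hy0 : 0 < v + (4/25)*u := by linarith
  have hu20 : |u| ≤ (20*(v + (4/25)*u)) := by rw [abs_of_pos hu0]; linarith
  have hv5 : |v| ≤ (5*(v + (4/25)*u)) := abs_le.mpr ⟨by linarith, by linarith⟩
  have hb1 : |u * s| ≤ 1 * w₁ := (mbd hu1 hsw)
  obtain ⟨hb1l, hb1r⟩ := abs_le.mp hb1
  have hb2 : |u * a| ≤ 1 * w₁ := (mbd hu1 haw)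
  obtain ⟨hb2l, hb2r⟩ := abs_le.mp hb2
  have hb3 : |u * (a * s)| ≤ 1 * (w₁ * 1) := (mbd hu1 (mbd haw hs1))
  obtain ⟨hb3l, hb3r⟩ := abs_le.mp hb3
  have hb4 : |u * v| ≤ (20*(v + (4/25)*u)) * (1/4000 : ℝ) := (mbd hu20 hvd)
  obtain ⟨hb4l, hb4r⟩ := abs_le.mp hb4
  have hb5 : |u * (v * s)| ≤ 1 * (1 * w₁) := (mbd hu1 (mbd hv1 hsw))
  obtain ⟨hb5l, hb5r⟩ := abs_le.mp hb5
  have hb6 : |u * (v * a)| ≤ 1 * (1 * w₁) := (mbd hu1 (mbd hv1 haw))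
  obtain ⟨hb6l, hb6r⟩ := abs_le.mp hb6
  have hb7 : |u * (v * (a * s))| ≤ 1 * (1 * (w₁ * 1)) := (mbd hu1 (mbd hv1 (mbd haw hs1)))
  obtain ⟨hb7l, hb7r⟩ := abs_le.mp hb7
  have hb8 : |u * u| ≤ (20*(v + (4/25)*u)) * (1/4000 : ℝ) := (mbd hu20 hud2)
  obtain ⟨hb8l, hb8r⟩ := abs_le.mp hb8
  have hb9 : |u * (u * s)| ≤ 1 * (1 * w₁) := (mbd hu1 (mbd hu1 hsw))
  obtain ⟨hb9l, hb9r⟩ := abs_le.mp hb9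
  have hb10 : |u * (u * (s * s))| ≤ 1 * (1 * (w₁ * 1)) := (mbd hu1 (mbd hu1 (mbd hsw hs1)))
  obtain ⟨hb10l, hb10r⟩ := abs_le.mp hb10
  have hb11 : |u * (u * a)| ≤ 1 * (1 * w₁) := (mbd hu1 (mbd hu1 haw))
  obtain ⟨hb11l, hb11r⟩ := abs_le.mp hb11
  have hb12 : |u * (u * (a * s))| ≤ 1 * (1 * (w₁ * 1)) := (mbd hu1 (mbd hu1 (mbd haw hs1)))
  obtain ⟨hb12l, hb12r⟩ := abs_le.mp hb12
  have hb13 : |u * (u * (a * (s * s)))| ≤ 1 * (1 * (w₁ * (1 * 1))) := (mbd hu1 (mbd hu1 (mbd haw (mbd hs1 hs1))))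
  obtain ⟨hb13l, hb13r⟩ := abs_le.mp hb13
  have hb14 : |u * (u * v)| ≤ (20*(v + (4/25)*u)) * ((1/4000 : ℝ) * 1) := (mbd hu20 (mbd hud2 hv1))
  obtain ⟨hb14l, hb14r⟩ := abs_le.mp hb14
  have hb15 : |u * (u * (v * s))| ≤ 1 * (1 * (1 * w₁)) := (mbd hu1 (mbd hu1 (mbd hv1 hsw)))
  obtain ⟨hb15l, hb15r⟩ := abs_le.mp hb15
  have hb16 : |u * (u * (v * (s * s)))| ≤ 1 * (1 * (1 * (w₁ * 1))) := (mbd hu1 (mbd hu1 (mbd hv1 (mbd hsw hs1))))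
  obtain ⟨hb16l, hb16r⟩ := abs_le.mp hb16
  have hb17 : |u * (u * (v * a))| ≤ 1 * (1 * (1 * w₁)) := (mbd hu1 (mbd hu1 (mbd hv1 haw)))
  obtain ⟨hb17l, hb17r⟩ := abs_le.mp hb17
  have hb18 : |u * (u * (v * (a * s)))| ≤ 1 * (1 * (1 * (w₁ * 1))) := (mbd hu1 (mbd hu1 (mbd hv1 (mbd haw hs1))))
  obtain ⟨hb18l, hb18r⟩ := abs_le.mp hb18
  have hb19 : |u * (u * (v * (a * (s * s))))| ≤ 1 * (1 * (1 * (w₁ * (1 * 1)))) := (mbd hu1 (mbd hu1 (mbd hv1 (mbd haw (mbd hs1 hs1)))))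
  obtain ⟨hb19l, hb19r⟩ := abs_le.mp hb19
  have hb20 : |u * (u * u)| ≤ (20*(v + (4/25)*u)) * ((1/4000 : ℝ) * 1) := (mbd hu20 (mbd hud2 hu1))
  obtain ⟨hb20l, hb20r⟩ := abs_le.mp hb20
  have hb21 : |u * (u * (u * (s * s)))| ≤ 1 * (1 * (1 * (w₁ * 1))) := (mbd hu1 (mbd hu1 (mbd hu1 (mbd hsw hs1))))
  obtain ⟨hb21l, hb21r⟩ := abs_le.mp hb21
  have hb22 : |u * (u * (u * a))| ≤ 1 * (1 * (1 * w₁)) := (mbd hu1 (mbd hu1 (mbd hu1 haw)))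
  obtain ⟨hb22l, hb22r⟩ := abs_le.mp hb22
  have hb23 : |u * (u * (u * (a * (s * s))))| ≤ 1 * (1 * (1 * (w₁ * (1 * 1)))) := (mbd hu1 (mbd hu1 (mbd hu1 (mbd haw (mbd hs1 hs1)))))
  obtain ⟨hb23l, hb23r⟩ := abs_le.mp hb23
  have hb24 : |u * (u * (u * v))| ≤ (20*(v + (4/25)*u)) * ((1/4000 : ℝ) * (1 * 1)) := (mbd hu20 (mbd hud2 (mbd hu1 hv1)))
  obtain ⟨hb24l, hb24r⟩ := abs_le.mp hb24
  have hb25 : |u * (u * (u * (v * (s * s))))| ≤ 1 * (1 * (1 * (1 * (w₁ * 1)))) := (mbd hu1 (mbd hu1 (mbd hu1 (mbd hv1 (mbd hsw hs1)))))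
  obtain ⟨hb25l, hb25r⟩ := abs_le.mp hb25
  have hb26 : |u * (u * (u * (v * a)))| ≤ 1 * (1 * (1 * (1 * w₁))) := (mbd hu1 (mbd hu1 (mbd hu1 (mbd hv1 haw))))
  obtain ⟨hb26l, hb26r⟩ := abs_le.mp hb26
  have hb27 : |u * (u * (u * (v * (a * (s * s)))))| ≤ 1 * (1 * (1 * (1 * (w₁ * (1 * 1))))) := (mbd hu1 (mbd hu1 (mbd hu1 (mbd hv1 (mbd haw (mbd hs1 hs1))))))
  obtain ⟨hb27l, hb27r⟩ := abs_le.mp hb27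
  linarith [hb1l, hb1r, hb2l, hb2r, hb3l, hb3r, hb4l, hb4r, hb5l, hb5r, hb6l, hb6r, hb7l, hb7r, hb8l, hb8r, hb9l, hb9r, hb10l, hb10r, hb11l, hb11r, hb12l, hb12r, hb13l, hb13r, hb14l, hb14r, hb15l, hb15r, hb16l, hb16r, hb17l, hb17r, hb18l, hb18r, hb19l, hb19r, hb20l, hb20r, hb21l, hb21r, hb22l, hb22r, hb23l, hb23r, hb24l, hb24r, hb25l, hb25r, hb26l, hb26r, hb27l, hb27r, hcone, hy0, hu0, hw0]

private lemma KI3lem (u v a s w₁ : ℝ) (hu0 : 0 < u) (hud : u ≤ 1/4000)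
    (hv : |v| ≤ 1/4000) (haw : |a| ≤ w₁) (hs0 : 0 ≤ s) (hsw' : s ≤ w₁)
    (hw0 : 0 ≤ w₁) (hwd : w₁ ≤ 1/4000)
    (hcone : v + (4/25)*u ≤ u/20 + 700*w₁) :
    -(2700*w₁) ≤ (1 - u) * (((1/5 : ℝ) - v) * (3 - 4*u) - (3/4 + a) * ((1 + s) * (4/5 + v) * (1 - u + s*u))) := by
  have hu1 : |u| ≤ 1 := by rw [abs_of_pos hu0]; linarith
  have hud2 : |u| ≤ (1/4000 : ℝ) := by rw [abs_of_pos hu0]; linarith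
  have hvd : |v| ≤ (1/4000 : ℝ) := hv
  have hv1 : |v| ≤ 1 := hv.trans (by norm_num)
  have ha1 : |a| ≤ 1 := haw.trans (hwd.trans (by norm_num))
  have hsw : |s| ≤ w₁ := by rw [abs_of_nonneg hs0]; exact hsw'
  have hs1 : |s| ≤ 1 := hsw.trans (hwd.trans (by norm_num))
  have huu : |u| ≤ u := le_of_eq (abs_of_pos hu0)
  have hb1 : |s| ≤ w₁ := hsw
  obtain ⟨hb1l, hb1r⟩ := abs_le.mp hb1
  have hb2 : |a| ≤ w₁ := haw
  obtain ⟨hb2l, hb2r⟩ := abs_le.mp hb2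
  have hb3 : |a * s| ≤ w₁ * 1 := (mbd haw hs1)
  obtain ⟨hb3l, hb3r⟩ := abs_le.mp hb3
  have hb4 : |v * s| ≤ 1 * w₁ := (mbd hv1 hsw)
  obtain ⟨hb4l, hb4r⟩ := abs_le.mp hb4
  have hb5 : |v * a| ≤ 1 * w₁ := (mbd hv1 haw)
  obtain ⟨hb5l, hb5r⟩ := abs_le.mp hb5
  have hb6 : |v * (a * s)| ≤ 1 * (w₁ * 1) := (mbd hv1 (mbd haw hs1))
  obtain ⟨hb6l, hb6r⟩ := abs_le.mp hb6
  have hb7 : |u * s| ≤ 1 * w₁ := (mbd hu1 hsw)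
  obtain ⟨hb7l, hb7r⟩ := abs_le.mp hb7
  have hb8 : |u * (s * s)| ≤ 1 * (w₁ * 1) := (mbd hu1 (mbd hsw hs1))
  obtain ⟨hb8l, hb8r⟩ := abs_le.mp hb8
  have hb9 : |u * a| ≤ 1 * w₁ := (mbd hu1 haw)
  obtain ⟨hb9l, hb9r⟩ := abs_le.mp hb9
  have hb10 : |u * (a * s)| ≤ 1 * (w₁ * 1) := (mbd hu1 (mbd haw hs1))
  obtain ⟨hb10l, hb10r⟩ := abs_le.mp hb10
  have hb11 : |u * (a * (s * s))| ≤ 1 * (w₁ * (1 * 1)) := (mbd hu1 (mbd haw (mbd hs1 hs1)))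
  obtain ⟨hb11l, hb11r⟩ := abs_le.mp hb11
  have hb12 : |u * v| ≤ u * (1/4000 : ℝ) := (mbd huu hvd)
  obtain ⟨hb12l, hb12r⟩ := abs_le.mp hb12
  have hb13 : |u * (v * s)| ≤ 1 * (1 * w₁) := (mbd hu1 (mbd hv1 hsw))
  obtain ⟨hb13l, hb13r⟩ := abs_le.mp hb13
  have hb14 : |u * (v * (s * s))| ≤ 1 * (1 * (w₁ * 1)) := (mbd hu1 (mbd hv1 (mbd hsw hs1)))
  obtain ⟨hb14l, hb14r⟩ := abs_le.mp hb14
  have hb15 : |u * (v * a)| ≤ 1 * (1 * w₁) := (mbd hu1 (mbd hv1 haw))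
  obtain ⟨hb15l, hb15r⟩ := abs_le.mp hb15
  have hb16 : |u * (v * (a * s))| ≤ 1 * (1 * (w₁ * 1)) := (mbd hu1 (mbd hv1 (mbd haw hs1)))
  obtain ⟨hb16l, hb16r⟩ := abs_le.mp hb16
  have hb17 : |u * (v * (a * (s * s)))| ≤ 1 * (1 * (w₁ * (1 * 1))) := (mbd hu1 (mbd hv1 (mbd haw (mbd hs1 hs1))))
  obtain ⟨hb17l, hb17r⟩ := abs_le.mp hb17
  have hb18 : |u * u| ≤ u * (1/4000 : ℝ) := (mbd huu hud2)
  obtain ⟨hb18l, hb18r⟩ := abs_le.mp hb18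
  have hb19 : |u * (u * (s * s))| ≤ 1 * (1 * (w₁ * 1)) := (mbd hu1 (mbd hu1 (mbd hsw hs1)))
  obtain ⟨hb19l, hb19r⟩ := abs_le.mp hb19
  have hb20 : |u * (u * a)| ≤ 1 * (1 * w₁) := (mbd hu1 (mbd hu1 haw))
  obtain ⟨hb20l, hb20r⟩ := abs_le.mp hb20
  have hb21 : |u * (u * (a * (s * s)))| ≤ 1 * (1 * (w₁ * (1 * 1))) := (mbd hu1 (mbd hu1 (mbd haw (mbd hs1 hs1))))
  obtain ⟨hb21l, hb21r⟩ := abs_le.mp hb21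
  have hb22 : |u * (u * v)| ≤ u * ((1/4000 : ℝ) * 1) := (mbd huu (mbd hud2 hv1))
  obtain ⟨hb22l, hb22r⟩ := abs_le.mp hb22
  have hb23 : |u * (u * (v * (s * s)))| ≤ 1 * (1 * (1 * (w₁ * 1))) := (mbd hu1 (mbd hu1 (mbd hv1 (mbd hsw hs1))))
  obtain ⟨hb23l, hb23r⟩ := abs_le.mp hb23
  have hb24 : |u * (u * (v * a))| ≤ 1 * (1 * (1 * w₁)) := (mbd hu1 (mbd hu1 (mbd hv1 haw)))
  obtain ⟨hb24l, hb24r⟩ := abs_le.mp hb24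
  have hb25 : |u * (u * (v * (a * (s * s))))| ≤ 1 * (1 * (1 * (w₁ * (1 * 1)))) := (mbd hu1 (mbd hu1 (mbd hv1 (mbd haw (mbd hs1 hs1)))))
  obtain ⟨hb25l, hb25r⟩ := abs_le.mp hb25
  linarith [hb1l, hb1r, hb2l, hb2r, hb3l, hb3r, hb4l, hb4r, hb5l, hb5r, hb6l, hb6r, hb7l, hb7r, hb8l, hb8r, hb9l, hb9r, hb10l, hb10r, hb11l, hb11r, hb12l, hb12r, hb13l, hb13r, hb14l, hb14r, hb15l, hb15r, hb16l, hb16r, hb17l, hb17r, hb18l, hb18r, hb19l, hb19r, hb20l, hb20r, hb21l, hb21r, hb22l, hb22r, hb23l, hb23r, hb24l, hb24r, hb25l, hb25r, hcone, hu0, hw0, hud, hwd]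

/-- For `n₀ = 3` (`Υ(0) = 3/4`), no interior orbit converges to
the fixed point `B₁ = (0, 4/5, 0)` as `λ → ∞`. -/
theorem stmt14
    (Υ σ f : ℝ → ℝ)
    (hΥ : ContDiffOn ℝ 1 Υ (Icc 0 1)) (hσ : ContDiffOn ℝ 1 σ (Icc 0 1))
    (hf : ContDiffOn ℝ 1 f (Icc 0 1))
    (hfpos : ∀ x ∈ Icc (0:ℝ) 1, 0 < f x)
    (hσnonneg : ∀ x ∈ Icc (0:ℝ) 1, 0 ≤ σ x)
    (hΥnonneg : ∀ x ∈ Icc (0:ℝ) 1, 0 ≤ Υ x)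
    (γ₁ : ℝ) (hγ₁ : 1 < γ₁) (hγ₁' : γ₁ ≤ 2)
    (hΥ0 : Υ 0 = 3 / 4) (hΥ1 : Υ 1 = 1)
    (hσ0 : σ 0 = 0) (hσ1 : σ 1 = γ₁ - 1)
    (hf0 : 0 < f 0) (hf1 : 0 < f 1)
    (U V W : ℝ → ℝ)
    (hU : ∀ l : ℝ, HasDerivAt U (Ffield Υ σ f (U l) (V l) (W l)).1 l)
    (hV : ∀ l : ℝ, HasDerivAt V (Ffield Υ σ f (U l) (V l) (W l)).2.1 l)
    (hW : ∀ l : ℝ, HasDerivAt W (Ffield Υ σ f (U l) (V l) (W l)).2.2 l)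
    (hint : ∀ l : ℝ, U l ∈ Ioo (0:ℝ) 1 ∧ V l ∈ Ioo (0:ℝ) 1 ∧ W l ∈ Ioo (0:ℝ) 1) :
    ¬ Filter.Tendsto (fun l => (U l, V l, W l)) Filter.atTop
        (nhds ((0 : ℝ), (4 / 5 : ℝ), (0 : ℝ))) := by
  intro hconv
  -- component limits
  have hUt : Tendsto U atTop (𝓝 (0:ℝ)) := by
    exact (continuous_fst.tendsto _).comp hconv
  have hVt : Tendsto V atTop (𝓝 ((4:ℝ)/5)) := by
    exact ((continuous_fst.comp continuous_snd).tendsto _).comp hconv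
  have hWt : Tendsto W atTop (𝓝 (0:ℝ)) := by
    exact ((continuous_snd.comp continuous_snd).tendsto _).comp hconv
  -- Lipschitz bounds for Υ and σ on [0,1]
  have hlip : ∀ F : ℝ → ℝ, ContDiffOn ℝ 1 F (Icc 0 1) →
      ∃ c : ℝ, 0 ≤ c ∧ ∀ w ∈ Icc (0:ℝ) 1, |F w - F 0| ≤ c * w := by
    intro F hF
    obtain ⟨c0, hc0⟩ := isCompact_Icc.exists_bound_of_continuousOn
      (hF.continuousOn_derivWithin (uniqueDiffOn_Icc (by norm_num : (0:ℝ) < 1)) le_rfl)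
    refine ⟨max c0 0, le_max_right _ _, fun w hw => ?_⟩
    have h := Convex.norm_image_sub_le_of_norm_derivWithin_le (𝕜 := ℝ) (C := max c0 0)
      (hF.differentiableOn one_ne_zero)
      (fun x hx => (hc0 x hx).trans (le_max_left _ _)) (convex_Icc 0 1)
      (left_mem_Icc.mpr zero_le_one) hw
    simpa [Real.norm_eq_abs, abs_of_nonneg hw.1] using h
  obtain ⟨cΥ, hcΥ0, hcΥ⟩ := hlip Υ hΥ
  obtain ⟨cσ, hcσ0, hcσ⟩ := hlip σ hσ
  set C : ℝ := max 1 (max cΥ cσ) with hCdef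
  have hC1 : 1 ≤ C := le_max_left _ _
  have hC0 : (0:ℝ) < C := lt_of_lt_of_le one_pos hC1
  have hmem : ∀ l, W l ∈ Icc (0:ℝ) 1 := fun l => ⟨(hint l).2.2.1.le, (hint l).2.2.2.le⟩
  have hCa : ∀ l, |Υ (W l) - 3/4| ≤ C * W l := by
    intro l
    have h2 := hcΥ (W l) (hmem l)
    rw [hΥ0] at h2
    exact h2.trans (mul_le_mul_of_nonneg_right
      ((le_max_left cΥ cσ).trans (le_max_right 1 _)) (hmem l).1)
  have hCs : ∀ l, σ (W l) ≤ C * W l := by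
    intro l
    have h2 := hcσ (W l) (hmem l)
    rw [hσ0, sub_zero] at h2
    exact (le_abs_self _).trans (h2.trans (mul_le_mul_of_nonneg_right
      ((le_max_right cΥ cσ).trans (le_max_right 1 _)) (hmem l).1))
  -- positive lower bound for f
  obtain ⟨x₀, hx₀mem, hx₀⟩ := isCompact_Icc.exists_isMinOn
    (nonempty_Icc.mpr zero_le_one) hf.continuousOn
  set m : ℝ := f x₀ with hmdef
  have hm : 0 < m := hfpos x₀ hx₀mem
  have hmle : ∀ l, m ≤ f (W l) := fun l => hx₀ (hmem l)
  -- entering the neighborhood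
  set δ : ℝ := (1/4000) / C with hδdef
  have hδ0 : 0 < δ := div_pos (by norm_num) hC0
  have hev : ∀ᶠ l in atTop, U l < δ ∧ |V l - 4/5| < 1/4000 ∧ W l < δ := by
    have e1 : ∀ᶠ l in atTop, U l < δ := hUt (Iio_mem_nhds hδ0)
    have e2 : ∀ᶠ l in atTop, V l ∈ Ioo (4/5 - 1/4000 : ℝ) (4/5 + 1/4000 : ℝ) :=
      hVt (Ioo_mem_nhds (by norm_num) (by norm_num))
    have e3 : ∀ᶠ l in atTop, W l < δ := hWt (Iio_mem_nhds hδ0)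
    filter_upwards [e1, e2, e3] with l h1 h2 h3
    exact ⟨h1, abs_sub_lt_iff.2 ⟨by linarith [h2.2], by linarith [h2.1]⟩, h3⟩
  obtain ⟨L0, hL0⟩ := eventually_atTop.mp hev
  -- base bundle of estimates valid for l ≥ L0
  have hbase : ∀ l, L0 ≤ l → (0 < U l ∧ U l ≤ 1/4000 ∧ |V l - 4/5| ≤ 1/4000 ∧
      |Υ (W l) - 3/4| ≤ C * W l ∧ 0 ≤ σ (W l) ∧ σ (W l) ≤ C * W l ∧
      0 ≤ C * W l ∧ C * W l ≤ 1/4000) := by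
    intro l hl
    obtain ⟨e1, e2, e3⟩ := hL0 l hl
    have hWpos := (hint l).2.2.1
    have hδle : δ ≤ 1/4000 := by
      rw [hδdef]; exact div_le_self (by norm_num) hC1
    have hCδ : C * δ = 1/4000 := by
      rw [hδdef]; field_simp
    have hCW : C * W l < 1/4000 := by
      have := mul_lt_mul_of_pos_left e3 hC0
      linarith
    exact ⟨(hint l).1.1, by linarith, e2.le, hCa l, hσnonneg _ (hmem l), hCs l,
      mul_nonneg hC0.le hWpos.le, hCW.le⟩
  
  -- rewriting the field components
  have heq1 : ∀ l, (Ffield Υ σ f (U l) (V l) (W l)).1 =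
      U l * (1 - U l) * (((1/5 : ℝ) - (V l - 4/5)) * (3 - 4*(U l)) -
        (3/4 + (Υ (W l) - 3/4)) * ((1 + σ (W l)) * (4/5 + (V l - 4/5)) *
          (1 - U l + σ (W l)*(U l)))) := by
    intro l; simp only [Ffield, Hfun]; ring
  have heq2 : ∀ l, (Ffield Υ σ f (U l) (V l) (W l)).2.1 =
      (4/5 + (V l - 4/5)) * ((1/5 : ℝ) - (V l - 4/5)) *
        ((2*(U l) - 1) * ((1/5 : ℝ) - (V l - 4/5) + 2*(σ (W l))*(4/5 + (V l - 4/5))) +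
         (1/4 - (Υ (W l) - 3/4)) * ((1 + σ (W l)) * (4/5 + (V l - 4/5)) *
           (1 - U l + (σ (W l))*(U l)))) := by
    intro l; simp only [Ffield, Hfun]; ring
  -- the three key inequalities along the orbit
  have hKI1 : ∀ l, L0 ≤ l → (U l)/20 + 700*(C*W l) ≤ (V l - 4/5) + (4/25)*(U l) →
      ((V l - 4/5) + (4/25)*(U l))/10 ≤
        (Ffield Υ σ f (U l) (V l) (W l)).2.1 + (4/25)*(Ffield Υ σ f (U l) (V l) (W l)).1 := by
    intro l hl hcone
    obtain ⟨h1,h2,h3,h4,h5,h6,h7,h8⟩ := hbase l hl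
    have key := KI1lem (U l) (V l - 4/5) (Υ (W l) - 3/4) (σ (W l)) (C*W l)
      h1 h2 h3 h4 h5 h6 h7 h8 hcone
    rw [heq1 l, heq2 l]
    linarith [key]
  have hKI2 : ∀ l, L0 ≤ l → (U l)/20 + 700*(C*W l) ≤ (V l - 4/5) + (4/25)*(U l) →
      (Ffield Υ σ f (U l) (V l) (W l)).1 ≤ (V l - 4/5) + (4/25)*(U l) := by
    intro l hl hcone
    obtain ⟨h1,h2,h3,h4,h5,h6,h7,h8⟩ := hbase l hl
    have key := KI2lem (U l) (V l - 4/5) (Υ (W l) - 3/4) (σ (W l)) (C*W l)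
      h1 h2 h3 h4 h5 h6 h7 h8 hcone
    rw [heq1 l]
    linarith [key]
  have hKI3 : ∀ l, L0 ≤ l → (V l - 4/5) + (4/25)*(U l) ≤ (U l)/20 + 700*(C*W l) →
      -(2700*(C*W l)) ≤ (1 - U l) * (((1/5 : ℝ) - (V l - 4/5)) * (3 - 4*(U l)) -
        (3/4 + (Υ (W l) - 3/4)) * ((1 + σ (W l)) * (4/5 + (V l - 4/5)) *
          (1 - U l + σ (W l)*(U l)))) := by
    intro l hl hcone
    obtain ⟨h1,h2,h3,h4,h5,h6,h7,h8⟩ := hbase l hl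
    exact KI3lem (U l) (V l - 4/5) (Υ (W l) - 3/4) (σ (W l)) (C*W l)
      h1 h2 h3 h4 h5 h6 h7 h8 hcone
  -- estimates on the third component
  have hHpos : ∀ l, 0 < Hfun σ (U l) (V l) (W l) := by
    intro l
    obtain ⟨⟨hu0, hu1⟩, ⟨hv0, hv1⟩, ⟨hw0, hw1⟩⟩ := hint l
    have hs0 := hσnonneg _ (hmem l)
    simp only [Hfun]
    have h2 : 0 < 1 - U l + σ (W l) * U l := by nlinarith
    have h3 : 0 < 1 + σ (W l) := by linarith
    exact mul_pos (mul_pos h3 hv0) h2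
  have hF3le : ∀ l, (Ffield Υ σ f (U l) (V l) (W l)).2.2 ≤ 0 := by
    intro l
    obtain ⟨⟨hu0, hu1⟩, ⟨hv0, hv1⟩, ⟨hw0, hw1⟩⟩ := hint l
    have hfp := hfpos _ (hmem l)
    have hH := hHpos l
    have : 0 < f (W l) * W l * (1 - W l) * Hfun σ (U l) (V l) (W l) :=
      mul_pos (mul_pos (mul_pos hfp hw0) (by linarith)) hH
    show -(f (W l)) * W l * (1 - W l) * Hfun σ (U l) (V l) (W l) ≤ 0
    nlinarith
  have hF3N : ∀ l, L0 ≤ l →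
      (Ffield Υ σ f (U l) (V l) (W l)).2.2 ≤ -((m/2) * W l) := by
    intro l hl
    obtain ⟨h1,h2,h3,h4,h5,h6,h7,h8⟩ := hbase l hl
    obtain ⟨⟨hu0, hu1⟩, ⟨hv0, hv1⟩, ⟨hw0, hw1⟩⟩ := hint l
    have hfW := hmle l
    have hWle : W l ≤ 1/4000 := le_trans (le_mul_of_one_le_left hw0.le hC1) h8
    obtain ⟨hv4a, hv4b⟩ := abs_le.mp h3
    have hH34 : 3/4 ≤ Hfun σ (U l) (V l) (W l) := by
      simp only [Hfun]
      nlinarith [mul_nonneg h5 hv0.le, mul_nonneg (mul_nonneg h5 hv0.le) hu0.le,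
        mul_nonneg (mul_nonneg (mul_nonneg h5 h5) hv0.le) hu0.le]
    have k1 : (1 - 1/4000 : ℝ) * (3/4) ≤ (1 - W l) * Hfun σ (U l) (V l) (W l) :=
      mul_le_mul (by linarith) hH34 (by norm_num) (by linarith)
    have k3 : m * ((1 - W l) * Hfun σ (U l) (V l) (W l)) ≤
        f (W l) * ((1 - W l) * Hfun σ (U l) (V l) (W l)) :=
      mul_le_mul_of_nonneg_right hfW (by nlinarith)
    have k4 : m/2 ≤ f (W l) * ((1 - W l) * Hfun σ (U l) (V l) (W l)) := by nlinarith
    have k5 := mul_le_mul_of_nonneg_right k4 hw0.le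
    show -(f (W l)) * W l * (1 - W l) * Hfun σ (U l) (V l) (W l) ≤ -((m/2) * W l)
    nlinarith [k5]
  
  -- derivative facts
  have hyd : ∀ l, HasDerivAt (fun t => (V t - 4/5) + (4/25)*(U t))
      ((Ffield Υ σ f (U l) (V l) (W l)).2.1 + (4/25)*(Ffield Υ σ f (U l) (V l) (W l)).1) l :=
    fun l => ((hV l).sub_const _).add ((hU l).const_mul _)
  have hφd : ∀ l, HasDerivAt (fun t => ((V t - 4/5) + (4/25)*(U t)) - ((U t)/20 + 700*(C*W t)))
      (((Ffield Υ σ f (U l) (V l) (W l)).2.1 + (4/25)*(Ffield Υ σ f (U l) (V l) (W l)).1) -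
        ((Ffield Υ σ f (U l) (V l) (W l)).1/20 + 700*(C*(Ffield Υ σ f (U l) (V l) (W l)).2.2))) l :=
    fun l => (hyd l).sub (((hU l).div_const 20).add (((hW l).const_mul C).const_mul 700))
  have hyt : Tendsto (fun t => (V t - 4/5) + (4/25)*(U t)) atTop (𝓝 (0:ℝ)) := by
    have h1 := (hVt.sub_const (4/5)).add (hUt.const_mul (4/25))
    simpa using h1
  -- Part A : the orbit stays strictly below the cone for l ≥ L0
  have coneA : ∀ l, L0 ≤ l → (V l - 4/5) + (4/25)*(U l) < (U l)/20 + 700*(C*W l) := by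
    by_contra hcon
    push_neg at hcon
    obtain ⟨L1, hL10, hφ1⟩ := hcon
    -- forward invariance of the cone region
    have hinv : ∀ l, L1 ≤ l → (U l)/20 + 700*(C*W l) ≤ (V l - 4/5) + (4/25)*(U l) := by
      by_contra hcon2
      push_neg at hcon2
      obtain ⟨l₂, hl₂, hl₂'⟩ := hcon2
      have hφcont : Continuous (fun t => ((V t - 4/5) + (4/25)*(U t)) - ((U t)/20 + 700*(C*W t))) :=
        continuous_iff_continuousAt.2 fun t => (hφd t).continuousAt
      set S : Set ℝ :=
        {t | L1 ≤ t ∧ ((V t - 4/5) + (4/25)*(U t)) - ((U t)/20 + 700*(C*W t)) < 0} with hSdef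
      have hSne : S.Nonempty := ⟨l₂, hl₂, by linarith⟩
      have hSbdd : BddBelow S := ⟨L1, fun x hx => hx.1⟩
      set L2 : ℝ := sInf S with hL2def
      have hL2ge : L1 ≤ L2 := le_csInf hSne fun x hx => hx.1
      obtain ⟨sq, hsqa, hsqt, hsqm⟩ := exists_seq_tendsto_sInf hSne hSbdd
      have hφle : ((V L2 - 4/5) + (4/25)*(U L2)) - ((U L2)/20 + 700*(C*W L2)) ≤ 0 := by
        have htd : Tendsto (fun n => ((V (sq n) - 4/5) + (4/25)*(U (sq n))) -
            ((U (sq n))/20 + 700*(C*W (sq n)))) atTop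
            (𝓝 (((V L2 - 4/5) + (4/25)*(U L2)) - ((U L2)/20 + 700*(C*W L2)))) :=
          (hφcont.tendsto L2).comp hsqt
        exact le_of_tendsto htd (Eventually.of_forall fun n => (hsqm n).2.le)
      have hφge : 0 ≤ ((V L2 - 4/5) + (4/25)*(U L2)) - ((U L2)/20 + 700*(C*W L2)) := by
        rcases eq_or_lt_of_le hL2ge with hEq | hlt
        · rw [← hEq]; linarith [hφ1]
        · have hIco : ∀ x ∈ Ico L1 L2,
              0 ≤ ((V x - 4/5) + (4/25)*(U x)) - ((U x)/20 + 700*(C*W x)) := by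
            intro x hx
            by_contra hneg
            exact absurd (csInf_le hSbdd ⟨hx.1, lt_of_not_ge hneg⟩) (not_le.2 hx.2)
          have hev2 : ∀ᶠ x in 𝓝[<] L2,
              0 ≤ ((V x - 4/5) + (4/25)*(U x)) - ((U x)/20 + 700*(C*W x)) := by
            filter_upwards [Ico_mem_nhdsLT_of_mem (⟨hlt, le_rfl⟩ : L2 ∈ Ioc L1 L2)] using hIco
          exact ge_of_tendsto ((hφcont.tendsto L2).mono_left nhdsWithin_le_nhds) hev2
      have hφ0 : ((V L2 - 4/5) + (4/25)*(U L2)) - ((U L2)/20 + 700*(C*W L2)) = 0 :=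
        le_antisymm hφle hφge
      have hL20 : L0 ≤ L2 := le_trans hL10 hL2ge
      have hconeEq : (U L2)/20 + 700*(C*W L2) ≤ (V L2 - 4/5) + (4/25)*(U L2) := by linarith
      have hy2pos : 0 < (V L2 - 4/5) + (4/25)*(U L2) := by
        have hu0 := (hint L2).1.1
        have h7 := (hbase L2 hL20).2.2.2.2.2.2.1
        linarith
      have hdφpos : 0 < ((Ffield Υ σ f (U L2) (V L2) (W L2)).2.1 +
          (4/25)*(Ffield Υ σ f (U L2) (V L2) (W L2)).1) -
          ((Ffield Υ σ f (U L2) (V L2) (W L2)).1/20 +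
            700*(C*(Ffield Υ σ f (U L2) (V L2) (W L2)).2.2)) := by
        have k1 := hKI1 L2 hL20 hconeEq
        have k2 := hKI2 L2 hL20 hconeEq
        have k3 := hF3le L2
        have k4 : C*(Ffield Υ σ f (U L2) (V L2) (W L2)).2.2 ≤ 0 :=
          mul_nonpos_of_nonneg_of_nonpos hC0.le k3
        linarith
      have hev3 := eventually_pos_right (hφd L2) hφ0 hdφpos
      have hsqgt : ∀ n, L2 < sq n := by
        intro n
        refine lt_of_le_of_ne (csInf_le hSbdd (hsqm n)) fun h => ?_
        have h2 := (hsqm n).2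
        rw [← h] at h2
        linarith [hφ0, h2]
      have hsqt' : Tendsto sq atTop (𝓝[>] L2) :=
        tendsto_nhdsWithin_of_tendsto_nhds_of_eventually_within _ hsqt
          (Eventually.of_forall hsqgt)
      obtain ⟨n, hn⟩ := (hsqt'.eventually hev3).exists
      exact absurd hn (not_lt.2 (hsqm n).2.le)
    -- monotonicity of y on [L1, ∞)
    have hymono : MonotoneOn (fun t => (V t - 4/5) + (4/25)*(U t)) (Ici L1) := by
      apply monotoneOn_of_deriv_nonneg (convex_Ici _)
      · exact fun t _ => (hyd t).continuousAt.continuousWithinAt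
      · intro t ht
        exact (hyd t).differentiableAt.differentiableWithinAt
      · intro t ht
        rw [interior_Ici] at ht
        rw [(hyd t).deriv]
        have hc := hinv t ht.le
        have k1 := hKI1 t (le_trans hL10 ht.le) hc
        have hu0 := (hint t).1.1
        have h7 := (hbase t (le_trans hL10 ht.le)).2.2.2.2.2.2.1
        linarith
    have hy1pos : 0 < (V L1 - 4/5) + (4/25)*(U L1) := by
      have hu0 := (hint L1).1.1
      have h7 := (hbase L1 hL10).2.2.2.2.2.2.1
      linarith [hφ1]
    have hev4 : ∀ᶠ t in atTop, (V t - 4/5) + (4/25)*(U t) ∈ Iio ((V L1 - 4/5) + (4/25)*(U L1)) :=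
      hyt (Iio_mem_nhds hy1pos)
    obtain ⟨t, ht1, ht2⟩ := (hev4.and (eventually_ge_atTop L1)).exists
    have := hymono (mem_Ici.2 le_rfl) (mem_Ici.2 ht2) ht2
    simp only [mem_Iio] at ht1
    linarith
  
  -- Part B : the Lyapunov function log U - cχ · W is nondecreasing, so U stays bounded below
  set cχ : ℝ := 5400 * C / m with hcχdef
  have hcχ0 : 0 ≤ cχ := by positivity
  have hχd : ∀ l, HasDerivAt (fun t => Real.log (U t) - cχ * W t)
      ((Ffield Υ σ f (U l) (V l) (W l)).1 / U l -
        cχ * (Ffield Υ σ f (U l) (V l) (W l)).2.2) l :=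
    fun l => ((hU l).log (ne_of_gt (hint l).1.1)).sub ((hW l).const_mul cχ)
  have hχmono : MonotoneOn (fun t => Real.log (U t) - cχ * W t) (Ici L0) := by
    apply monotoneOn_of_deriv_nonneg (convex_Ici _)
    · exact fun t _ => (hχd t).continuousAt.continuousWithinAt
    · intro t ht
      exact (hχd t).differentiableAt.differentiableWithinAt
    · intro t ht
      rw [interior_Ici] at ht
      rw [(hχd t).deriv]
      have hcone := (coneA t ht.le).le
      have h3 := hKI3 t ht.le hcone
      have hu0 := (hint t).1.1
      have hdiv : (Ffield Υ σ f (U t) (V t) (W t)).1 / U t =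
          (1 - U t) * (((1/5 : ℝ) - (V t - 4/5)) * (3 - 4*(U t)) -
            (3/4 + (Υ (W t) - 3/4)) * ((1 + σ (W t)) * (4/5 + (V t - 4/5)) *
              (1 - U t + σ (W t)*(U t)))) := by
        rw [heq1 t]
        field_simp
      rw [hdiv]
      have hFN := hF3N t ht.le
      have k1 : cχ * (Ffield Υ σ f (U t) (V t) (W t)).2.2 ≤ cχ * (-((m/2) * W t)) :=
        mul_le_mul_of_nonneg_left hFN hcχ0
      have k2 : cχ * ((m/2) * W t) = 2700 * (C * W t) := by
        rw [hcχdef]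
        field_simp
        ring
      linarith
  have hlogbound : ∀ l, L0 ≤ l → Real.exp (Real.log (U L0) - cχ * W L0) ≤ U l := by
    intro l hl
    have h1 := hχmono (mem_Ici.2 le_rfl) (mem_Ici.2 hl) hl
    have h2 : Real.log (U L0) - cχ * W L0 ≤ Real.log (U l) := by
      have h3 : 0 ≤ cχ * W l := mul_nonneg hcχ0 (hint l).2.2.1.le
      simp only at h1
      linarith
    calc Real.exp (Real.log (U L0) - cχ * W L0) ≤ Real.exp (Real.log (U l)) :=
          Real.exp_le_exp.2 h2
      _ = U l := Real.exp_log (hint l).1.1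
  have hev5 : ∀ᶠ t in atTop, U t ∈ Iio (Real.exp (Real.log (U L0) - cχ * W L0)) :=
    hUt (Iio_mem_nhds (Real.exp_pos _))
  obtain ⟨t, ht1, ht2⟩ := (hev5.and (eventually_ge_atTop L0)).exists
  exact absurd (hlogbound t ht2) (not_le.2 ht1)
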